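/- If the one-sided local crossing number of (G, <_X) is k, then in the drawing produced by the median heuristic variant A (2-vertices' medians rounded up, others rounded down; ties broken with 2-vertices first sorted by heavy neighbor, then odd vertices, then 4⊕-vertices sorted ascending by degree), every median edge has at most k crossings. -/
import Mathlib


open scoped Classical

/-- Edges `e` and `f` cross in the 2-layer drawing where `Y` is ordered by the
position map `ord` (i.e. `y₁ <ᵧ y₂ ↔ ord y₁ < ord y₂`). -/
def tlCross {X Y : Type*} [LinearOrder X] (ord : Y → ℕ) (e f : X × Y) : Prop :=
  (e.1 < f.1 ∧ ord f.2 < ord e.2) ∨ (f.1 < e.1 ∧ ord e.2 < ord f.2)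

/-- Number of edges of `E` crossing the edge `e` in the drawing given by `ord`. -/
noncomputable def tlCrN {X Y : Type*} [LinearOrder X] (E : Finset (X × Y))
    (ord : Y → ℕ) (e : X × Y) : ℕ :=
  (E.filter (tlCross ord e)).card

/-- Local crossing number of the drawing of `E` given by `ord`: the maximum,
over all edges, of the number of edges crossing it. -/
noncomputable def tlLcr {X Y : Type*} [LinearOrder X] (E : Finset (X × Y))
    (ord : Y → ℕ) : ℕ :=
  E.sup (tlCrN E ord)

/-- Neighborhood in `X` of a vertex `y ∈ Y`. -/
noncomputable def tlNbrs {X Y : Type*} (E : Finset (X × Y)) (y : Y) : Finset X :=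
  (E.filter (fun q => q.2 = y)).image Prod.fst

/-- Degree of a vertex `y ∈ Y`. -/
noncomputable def tlDeg {X Y : Type*} (E : Finset (X × Y)) (y : Y) : ℕ :=
  (tlNbrs E y).card

/-- Tie-breaking rank of `y`: `0` for 2-vertices, `1` for odd vertices, `2` for
`4⁺`-vertices (even degree `≥ 4`). -/
noncomputable def tlRank {X Y : Type*} (E : Finset (X × Y)) (y : Y) : ℕ :=
  if tlDeg E y = 2 then 0 else if Odd (tlDeg E y) then 1 else 2

/-- `med` is the median assignment of variant `A`: `med y` is a neighbor of `y`;
for a 2-vertex the median is rounded up (it is the second neighbor, with exactly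
one neighbor before it), otherwise it is rounded down (the middle neighbor, with
exactly `⌈deg y / 2⌉ - 1` neighbors before it). -/
def tlMedianA {X Y : Type*} [LinearOrder X] (E : Finset (X × Y)) (med : Y → X) : Prop :=
  ∀ y : Y, med y ∈ tlNbrs E y ∧
    (if tlDeg E y = 2 then ((tlNbrs E y).filter (fun w => w < med y)).card = 1
     else ((tlNbrs E y).filter (fun w => w < med y)).card + 1 = (tlDeg E y + 1) / 2)

/-- `ordA` is an order of `Y` produced by variant `A` of the median heuristic:
vertices are ordered by their medians; within a bunch, 2-vertices come first,
sorted ascending by their heavy neighbors `heavy`, then odd vertices, then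
`4⁺`-vertices sorted ascending by degree. -/
def tlVariantA {X Y : Type*} [LinearOrder X] (E : Finset (X × Y))
    (med heavy : Y → X) (ordA : Y → ℕ) : Prop :=
  Function.Injective ordA ∧
  (∀ y₁ y₂ : Y, med y₁ < med y₂ → ordA y₁ < ordA y₂) ∧
  (∀ y₁ y₂ : Y, med y₁ = med y₂ → tlRank E y₁ < tlRank E y₂ → ordA y₁ < ordA y₂) ∧
  (∀ y₁ y₂ : Y, med y₁ = med y₂ → tlDeg E y₁ = 2 → tlDeg E y₂ = 2 →
    heavy y₁ < heavy y₂ → ordA y₁ < ordA y₂) ∧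
  (∀ y₁ y₂ : Y, med y₁ = med y₂ → tlRank E y₁ = 2 → tlRank E y₂ = 2 →
    tlDeg E y₁ < tlDeg E y₂ → ordA y₁ < ordA y₂)

/-- `heavy` assigns to every 2-vertex its heavy neighbor: the unique neighbor
distinct from its median. -/
def tlHeavyNbr {X Y : Type*} [LinearOrder X] (E : Finset (X × Y))
    (med heavy : Y → X) : Prop :=
  ∀ y : Y, tlDeg E y = 2 → heavy y ∈ tlNbrs E y ∧ heavy y ≠ med y

/-- The one-sided local crossing number of `(E, <ₓ)` is `k`: `k` is the minimum,
over all orders of `Y` (injective position maps), of the local crossing number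
of the resulting drawing. -/
def tlOslcr {X Y : Type*} [LinearOrder X] (E : Finset (X × Y)) (k : ℕ) : Prop :=
  IsLeast {m : ℕ | ∃ ord : Y → ℕ, Function.Injective ord ∧ tlLcr E ord = m} k

section Helpers
variable {X Y : Type*} [LinearOrder X]

noncomputable def tlL (E : Finset (X × Y)) (m : X) (z : Y) : ℕ :=
  ((tlNbrs E z).filter (fun w => w < m)).card

noncomputable def tlR (E : Finset (X × Y)) (m : X) (z : Y) : ℕ :=
  ((tlNbrs E z).filter (fun w => m < w)).card

lemma tl_mem_of_nbr {E : Finset (X × Y)} {w : X} {z : Y} (h : w ∈ tlNbrs E z) :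
    (w, z) ∈ E := by
  simp only [tlNbrs, Finset.mem_image, Finset.mem_filter] at h
  obtain ⟨q, ⟨hq, h2⟩, h1⟩ := h
  have : q = (w, z) := by
    cases q
    simp only [Prod.mk.injEq]
    exact ⟨h1, h2⟩
  rwa [this] at hq

lemma tl_fiber_card (E : Finset (X × Y)) (z : Y) (P : X → Prop) [DecidablePred P] :
    (E.filter (fun f => P f.1 ∧ f.2 = z)).card = ((tlNbrs E z).filter P).card := by
  apply Finset.card_bij (fun f _ => f.1)
  · intro f hf
    simp only [Finset.mem_filter] at hf ⊢
    refine ⟨?_, hf.2.1⟩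
    simp only [tlNbrs, Finset.mem_image, Finset.mem_filter]
    exact ⟨f, ⟨hf.1, hf.2.2⟩, rfl⟩
  · intro f hf g hg h
    simp only [Finset.mem_filter] at hf hg
    exact Prod.ext h (hf.2.2.trans hg.2.2.symm)
  · intro w hw
    simp only [Finset.mem_filter] at hw
    exact ⟨(w, z), Finset.mem_filter.mpr ⟨tl_mem_of_nbr hw.1, hw.2, rfl⟩, rfl⟩

lemma tl_L_add_R (E : Finset (X × Y)) (m : X) (z : Y) (hm : m ∈ tlNbrs E z) :
    tlL E m z + tlR E m z + 1 = tlDeg E z := by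
  have hsplit := Finset.card_filter_add_card_filter_not
    (s := tlNbrs E z) (p := fun w => w < m)
  have heq : (tlNbrs E z).filter (fun w => ¬ w < m)
      = insert m ((tlNbrs E z).filter (fun w => m < w)) := by
    ext w
    simp only [Finset.mem_filter, Finset.mem_insert, not_lt]
    constructor
    · rintro ⟨hw, hge⟩
      rcases eq_or_lt_of_le hge with h | h
      · exact Or.inl h.symm
      · exact Or.inr ⟨hw, h⟩
    · rintro (rfl | ⟨hw, h⟩)
      · exact ⟨hm, le_refl _⟩
      · exact ⟨hw, le_of_lt h⟩
  have hnm : m ∉ (tlNbrs E z).filter (fun w => m < w) := by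
    simp [Finset.mem_filter]
  rw [heq, Finset.card_insert_of_notMem hnm] at hsplit
  simp only [tlL, tlR, tlDeg]
  omega

lemma tl_cnt_eq (E : Finset (X × Y)) (ord : Y → ℕ) (m : X) (yy z : Y) :
    (E.filter (fun f => tlCross ord (m, yy) f ∧ f.2 = z)).card =
      if ord z < ord yy then tlR E m z
      else if ord yy < ord z then tlL E m z else 0 := by
  rcases lt_trichotomy (ord z) (ord yy) with h | h | h
  · rw [if_pos h, tlR, ← tl_fiber_card E z (fun w => m < w)]
    congr 1
    apply Finset.filter_congr
    intro f _
    dsimp only [tlCross]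
    constructor
    · rintro ⟨(⟨h1, h2⟩ | ⟨h1, h2⟩), hz⟩
      · exact ⟨h1, hz⟩
      · rw [hz] at h2; omega
    · rintro ⟨h1, hz⟩
      exact ⟨Or.inl ⟨h1, by rw [hz]; exact h⟩, hz⟩
  · rw [if_neg (by omega), if_neg (by omega)]
    rw [Finset.card_eq_zero, Finset.filter_eq_empty_iff]
    rintro f _ ⟨hc, hz⟩
    dsimp only [tlCross] at hc
    rcases hc with ⟨h1, h2⟩ | ⟨h1, h2⟩ <;> rw [hz] at h2 <;> omega
  · rw [if_neg (by omega), if_pos h, tlL, ← tl_fiber_card E z (fun w => w < m)]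
    congr 1
    apply Finset.filter_congr
    intro f _
    dsimp only [tlCross]
    constructor
    · rintro ⟨(⟨h1, h2⟩ | ⟨h1, h2⟩), hz⟩
      · rw [hz] at h2; omega
      · exact ⟨h1, hz⟩
    · rintro ⟨h1, hz⟩
      exact ⟨Or.inr ⟨h1, by rw [hz]; exact h⟩, hz⟩

lemma tl_crN_sum (E : Finset (X × Y)) (ord : Y → ℕ) (m : X) (yy : Y) :
    tlCrN E ord (m, yy) = ∑ z ∈ E.image Prod.snd,
      (if ord z < ord yy then tlR E m z
       else if ord yy < ord z then tlL E m z else 0) := by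
  rw [tlCrN, Finset.card_eq_sum_card_fiberwise
    (f := Prod.snd) (t := E.image Prod.snd)
    (fun x hx => Finset.mem_image_of_mem _ (Finset.mem_filter.mp hx).1)]
  refine Finset.sum_congr rfl fun z _ => ?_
  rw [Finset.filter_filter]
  exact tl_cnt_eq E ord m yy z

lemma tlL_mono (E : Finset (X × Y)) (z : Y) {a b : X} (h : a ≤ b) :
    tlL E a z ≤ tlL E b z := by
  apply Finset.card_le_card
  intro w hw
  simp only [Finset.mem_filter] at hw ⊢
  exact ⟨hw.1, lt_of_lt_of_le hw.2 h⟩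

lemma tlR_mono (E : Finset (X × Y)) (z : Y) {a b : X} (h : a ≤ b) :
    tlR E b z ≤ tlR E a z := by
  apply Finset.card_le_card
  intro w hw
  simp only [Finset.mem_filter] at hw ⊢
  exact ⟨hw.1, lt_of_le_of_lt h hw.2⟩

lemma tlL_insert (E : Finset (X × Y)) (z : Y) {a b : X}
    (ha : a ∈ tlNbrs E z) (h : a < b) : tlL E a z + 1 ≤ tlL E b z := by
  have hsub : insert a ((tlNbrs E z).filter (fun w => w < a))
      ⊆ (tlNbrs E z).filter (fun w => w < b) := by
    intro w hw
    simp only [Finset.mem_insert, Finset.mem_filter] at hw ⊢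
    rcases hw with rfl | ⟨h1, h2⟩
    · exact ⟨ha, h⟩
    · exact ⟨h1, h2.trans h⟩
  have hcard := Finset.card_le_card hsub
  rwa [Finset.card_insert_of_notMem (by simp)] at hcard

lemma tlR_insert (E : Finset (X × Y)) (z : Y) {a b : X}
    (hb : b ∈ tlNbrs E z) (h : a < b) : tlR E b z + 1 ≤ tlR E a z := by
  have hsub : insert b ((tlNbrs E z).filter (fun w => b < w))
      ⊆ (tlNbrs E z).filter (fun w => a < w) := by
    intro w hw
    simp only [Finset.mem_insert, Finset.mem_filter] at hw ⊢
    rcases hw with rfl | ⟨h1, h2⟩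
    · exact ⟨hb, h⟩
    · exact ⟨h1, h.trans h2⟩
  have hcard := Finset.card_le_card hsub
  rwa [Finset.card_insert_of_notMem (by simp)] at hcard

end Helpers



/-- If the one-sided local crossing number of `(G, <ₓ)` is `k` (every vertex of
`Y` having degree at least 1), then in the drawing produced by variant `A` of
the median heuristic, every median edge `(med y, y)` has at most `k`
crossings. -/
theorem variantA_median_edges_at_most_k
    {X Y : Type*} [LinearOrder X]
    (E : Finset (X × Y)) (k : ℕ)
    (hdeg : ∀ y : Y, 1 ≤ tlDeg E y)
    (med heavy : Y → X) (ordA : Y → ℕ)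
    (hmed : tlMedianA E med) (hheavy : tlHeavyNbr E med heavy)
    (hordA : tlVariantA E med heavy ordA)
    (hk : tlOslcr E k) :
    ∀ y : Y, tlCrN E ordA (med y, y) ≤ k := by
  obtain ⟨⟨ord', hinj', hlcr'⟩, -⟩ := hk
  obtain ⟨hinjA, hmlt, hrk, -, hdegOrd⟩ := hordA
  intro y
  set m := med y with hm
  set B := E.image Prod.snd with hB
  -- basic structural facts
  have hnbr : ∀ z : Y, (med z, z) ∈ E := fun z => tl_mem_of_nbr (hmed z).1
  have hLRz : ∀ z : Y, tlL E (med z) z + tlR E (med z) z + 1 = tlDeg E z :=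
    fun z => tl_L_add_R E (med z) z (hmed z).1
  have hmedc : ∀ z : Y, (tlDeg E z = 2 ∧ tlL E (med z) z = 1) ∨
      (tlDeg E z ≠ 2 ∧ tlL E (med z) z + 1 = (tlDeg E z + 1) / 2) := by
    intro z
    have h := (hmed z).2
    by_cases h2 : tlDeg E z = 2
    · rw [if_pos h2] at h; exact Or.inl ⟨h2, h⟩
    · rw [if_neg h2] at h; exact Or.inr ⟨h2, h⟩
  have fact1 : ∀ z : Y, med z < m → tlR E m z ≤ tlL E m z := by
    intro z hlt
    have h1 := tlL_insert E z (hmed z).1 hlt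
    have h2 := tlR_mono E z hlt.le
    have h3 := hLRz z
    rcases hmedc z with ⟨hd, hc⟩ | ⟨hd, hc⟩ <;> omega
  have fact2 : ∀ z : Y, m < med z → tlL E m z ≤ tlR E m z := by
    intro z hlt
    have h1 := tlR_insert E z (hmed z).1 hlt
    have h2 := tlL_mono E z hlt.le
    have h3 := hLRz z
    rcases hmedc z with ⟨hd, hc⟩ | ⟨hd, hc⟩ <;> omega
  have fact3 : ∀ z : Y, med z = m → tlDeg E z = 2 →
      tlL E m z = 1 ∧ tlR E m z = 0 := by
    intro z heq hd
    have h3 := hLRz z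
    rcases hmedc z with ⟨_, hc⟩ | ⟨hd', _⟩
    · rw [heq] at h3 hc; omega
    · exact absurd hd hd'
  have fact4 : ∀ z : Y, med z = m → tlDeg E z ≠ 2 → tlL E m z ≤ tlR E m z := by
    intro z heq hd
    have h3 := hLRz z
    rcases hmedc z with ⟨hd', _⟩ | ⟨_, hc⟩
    · exact absurd hd' hd
    · rw [heq] at h3 hc; omega
  have fact5 : ∀ z : Y, med z = m → Odd (tlDeg E z) → tlL E m z = tlR E m z := by
    intro z heq hodd
    have h3 := hLRz z
    have hodd' := Nat.odd_iff.mp hodd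
    rcases hmedc z with ⟨hd, _⟩ | ⟨_, hc⟩
    · omega
    · rw [heq] at h3 hc; omega
  have fact6 : ∀ z : Y, med z = m → tlDeg E z ≠ 2 → ¬ Odd (tlDeg E z) →
      tlR E m z = tlDeg E z / 2 := by
    intro z heq hd hodd
    have h3 := hLRz z
    have heven : tlDeg E z % 2 = 0 := by
      rcases Nat.even_or_odd (tlDeg E z) with h | h
      · exact Nat.even_iff.mp h
      · exact absurd h hodd
    rcases hmedc z with ⟨hd', _⟩ | ⟨_, hc⟩
    · exact absurd hd' hd
    · rw [heq] at h3 hc; omega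
  -- rank facts
  have hrank0 : ∀ z : Y, tlDeg E z = 2 → tlRank E z = 0 := by
    intro z h; rw [tlRank, if_pos h]
  have hrank1 : ∀ z : Y, Odd (tlDeg E z) → tlRank E z = 1 := by
    intro z h
    rw [tlRank, if_neg, if_pos h]
    intro h2; rw [h2] at h
    have := Nat.odd_iff.mp h
    omega
  have hrank2 : ∀ z : Y, tlDeg E z ≠ 2 → ¬ Odd (tlDeg E z) → tlRank E z = 2 := by
    intro z h1 h2; rw [tlRank, if_neg h1, if_neg h2]
  -- memberships
  have hyB : y ∈ B := Finset.mem_image_of_mem Prod.snd (hnbr y)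
  -- comparison machinery
  have hOge : ∀ u w : Y, w ≠ u →
      min (tlR E m w) (tlL E m w) ≤
        (if ord' w < ord' u then tlR E m w
         else if ord' u < ord' w then tlL E m w else 0) := by
    intro u w hne
    rcases (hinj'.ne hne).lt_or_gt with h | h
    · rw [if_pos h]; exact min_le_left _ _
    · rw [if_neg (by omega), if_pos h]; exact min_le_right _ _
  have hcompare : ∀ u : Y, u ∈ B → (m, u) ∈ E →
      (∀ z ∈ B,
        (if ordA z < ordA y then tlR E m z
         else if ordA y < ordA z then tlL E m z else 0) ≤
        (if ord' (Equiv.swap y u z) < ord' u then tlR E m (Equiv.swap y u z)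
         else if ord' u < ord' (Equiv.swap y u z) then tlL E m (Equiv.swap y u z)
         else 0)) →
      tlCrN E ordA (m, y) ≤ k := by
    intro u huB huE hterm
    have h1 : tlCrN E ordA (m, y) ≤ tlCrN E ord' (m, u) := by
      rw [tl_crN_sum E ordA m y, tl_crN_sum E ord' m u]
      have hswap : ∑ z ∈ B,
          (if ord' (Equiv.swap y u z) < ord' u then tlR E m (Equiv.swap y u z)
           else if ord' u < ord' (Equiv.swap y u z) then tlL E m (Equiv.swap y u z)
           else 0)
          = ∑ z ∈ B,
          (if ord' z < ord' u then tlR E m z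
           else if ord' u < ord' z then tlL E m z else 0) := by
        apply Finset.sum_equiv (Equiv.swap y u)
        · intro z
          by_cases hzy : z = y
          · subst hzy
            rw [Equiv.swap_apply_left]
            simp [hyB, huB]
          · by_cases hzu : z = u
            · subst hzu
              rw [Equiv.swap_apply_right]
              simp [hyB, huB]
            · rw [Equiv.swap_apply_of_ne_of_ne hzy hzu]
        · intro z _; rfl
      rw [← hB, ← hswap]
      exact Finset.sum_le_sum hterm
    calc tlCrN E ordA (m, y) ≤ tlCrN E ord' (m, u) := h1
      _ ≤ tlLcr E ord' := Finset.le_sup huE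
      _ = k := hlcr'
  -- case analysis on the type of y
  by_cases h2y : tlDeg E y = 2
  · -- y is a 2-vertex
    set T := B.filter (fun z => z ≠ y ∧ med z = m ∧ tlDeg E z = 2 ∧ ordA y < ordA z)
      with hT
    obtain ⟨u, huS, humin⟩ :=
      (insert y T).exists_min_image ord' ⟨y, Finset.mem_insert_self y T⟩
    have huyT : u = y ∨ u ∈ T := Finset.mem_insert.mp huS
    have hu_med : med u = m := by
      rcases huyT with rfl | h
      · exact hm.symm
      · exact ((Finset.mem_filter.mp h).2).2.1
    have hu_deg : tlDeg E u = 2 := by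
      rcases huyT with rfl | h
      · exact h2y
      · exact ((Finset.mem_filter.mp h).2).2.2.1
    have huB : u ∈ B := by
      rcases huyT with rfl | h
      · exact hyB
      · exact (Finset.mem_filter.mp h).1
    have huE : (m, u) ∈ E := hu_med ▸ hnbr u
    apply hcompare u huB huE
    intro z hzB
    by_cases hzy : z = y
    · subst hzy; simp
    by_cases hzu : z = u
    · subst hzu
      -- z = u ≠ y, so u ∈ T
      have huT : z ∈ T := huyT.resolve_left hzy
      have hAyu : ordA y < ordA z := ((Finset.mem_filter.mp huT).2).2.2.2
      rw [Equiv.swap_apply_right]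
      rw [if_neg (by omega), if_pos hAyu]
      have hord'uy : ord' z < ord' y := by
        have hle := humin y (Finset.mem_insert_self y T)
        exact lt_of_le_of_ne hle (hinj'.ne hzy)
      rw [if_neg (by omega), if_pos hord'uy]
      rw [(fact3 z hu_med hu_deg).1, (fact3 y hm.symm h2y).1]
    -- z ∉ {y, u}
    rw [Equiv.swap_apply_of_ne_of_ne hzy hzu]
    by_cases hzT : med z = m ∧ tlDeg E z = 2 ∧ ordA y < ordA z
    · -- z ∈ T
      obtain ⟨hzm, hzd, hzA⟩ := hzT
      have hzT' : z ∈ T := by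
        rw [hT, Finset.mem_filter]
        exact ⟨hzB, hzy, hzm, hzd, hzA⟩
      have hord' : ord' u < ord' z :=
        lt_of_le_of_ne (humin z (Finset.mem_insert_of_mem hzT'))
          (hinj'.ne (Ne.symm hzu))
      rw [if_neg (by omega), if_pos hzA, if_neg (by omega), if_pos hord']
    · refine le_trans ?_ (hOge u z hzu)
      rcases lt_trichotomy (med z) m with hlt | heq | hgt
      · have hA : ordA z < ordA y := hmlt z y (hm ▸ hlt)
        rw [if_pos hA]
        exact le_min le_rfl (fact1 z hlt)
      · by_cases hdz : tlDeg E z = 2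
        · -- 2-vertex not in T and ≠ y: must be before y
          have hA : ordA z < ordA y := by
            rcases (hinjA.ne hzy).lt_or_gt with h | h
            · exact h
            · exact absurd ⟨heq, hdz, h⟩ hzT
          rw [if_pos hA, (fact3 z heq hdz).2]
          exact Nat.zero_le _
        · -- rank z ≥ 1 > 0 = rank y, so y before z
          have hA : ordA y < ordA z := by
            apply hrk y z (by rw [← hm, heq])
            rw [hrank0 y h2y, tlRank, if_neg hdz]
            split <;> omega
          rw [if_neg (by omega), if_pos hA]
          exact le_min (fact4 z heq hdz) le_rfl
      · have hA : ordA y < ordA z := hmlt y z (hm ▸ hgt)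
        rw [if_neg (by omega), if_pos hA]
        exact le_min (fact2 z hgt) le_rfl
  · by_cases hoy : Odd (tlDeg E y)
    · -- y is an odd vertex; take u = y
      apply hcompare y hyB (hnbr y)
      intro z hzB
      by_cases hzy : z = y
      · subst hzy; simp
      rw [Equiv.swap_apply_of_ne_of_ne hzy hzy]
      refine le_trans ?_ (hOge y z hzy)
      rcases lt_trichotomy (med z) m with hlt | heq | hgt
      · have hA : ordA z < ordA y := hmlt z y (hm ▸ hlt)
        rw [if_pos hA]
        exact le_min le_rfl (fact1 z hlt)
      · by_cases hdz : tlDeg E z = 2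
        · have hA : ordA z < ordA y := by
            apply hrk z y (by rw [← hm, heq])
            rw [hrank0 z hdz, hrank1 y hoy]
            omega
          rw [if_pos hA, (fact3 z heq hdz).2]
          exact Nat.zero_le _
        · by_cases hoz : Odd (tlDeg E z)
          · have h5 := fact5 z heq hoz
            rcases (hinjA.ne hzy).lt_or_gt with h | h
            · rw [if_pos h]; exact le_min le_rfl (le_of_eq h5.symm)
            · rw [if_neg (by omega), if_pos h]
              exact le_min (le_of_eq h5) le_rfl
          · have hA : ordA y < ordA z := by
              apply hrk y z (by rw [← hm, heq])
              rw [hrank1 y hoy, hrank2 z hdz hoz]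
              omega
            rw [if_neg (by omega), if_pos hA]
            exact le_min (fact4 z heq hdz) le_rfl
      · have hA : ordA y < ordA z := hmlt y z (hm ▸ hgt)
        rw [if_neg (by omega), if_pos hA]
        exact le_min (fact2 z hgt) le_rfl
    · -- y is a 4⊕-vertex
      set D := B.filter (fun z => z ≠ y ∧ med z = m ∧ tlDeg E z ≠ 2 ∧
        ¬ Odd (tlDeg E z) ∧ ordA z < ordA y) with hD
      obtain ⟨u, huS, humax⟩ :=
        (insert y D).exists_max_image ord' ⟨y, Finset.mem_insert_self y D⟩
      have huyD : u = y ∨ u ∈ D := Finset.mem_insert.mp huS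
      have hu_med : med u = m := by
        rcases huyD with rfl | h
        · exact hm.symm
        · exact ((Finset.mem_filter.mp h).2).2.1
      have huB : u ∈ B := by
        rcases huyD with rfl | h
        · exact hyB
        · exact (Finset.mem_filter.mp h).1
      have huE : (m, u) ∈ E := hu_med ▸ hnbr u
      apply hcompare u huB huE
      intro z hzB
      by_cases hzy : z = y
      · subst hzy; simp
      by_cases hzu : z = u
      · subst hzu
        have huD : z ∈ D := huyD.resolve_left hzy
        obtain ⟨-, -, hmj, hd2, hodd, hAlt⟩ :
            z ∈ B ∧ z ≠ y ∧ med z = m ∧ tlDeg E z ≠ 2 ∧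
              ¬ Odd (tlDeg E z) ∧ ordA z < ordA y := by
          have := Finset.mem_filter.mp huD
          exact ⟨this.1, this.2.1, this.2.2.1, this.2.2.2.1, this.2.2.2.2.1,
            this.2.2.2.2.2⟩
        rw [Equiv.swap_apply_right]
        rw [if_pos hAlt]
        have hord'yu : ord' y < ord' z := by
          have hle := humax y (Finset.mem_insert_self y D)
          exact lt_of_le_of_ne hle (hinj'.ne (Ne.symm hzy))
        rw [if_pos hord'yu]
        -- tlR E m z ≤ tlR E m y, via degrees
        have hdzy : tlDeg E z ≤ tlDeg E y := by
          by_contra hlt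
          push_neg at hlt
          have := hdegOrd y z (by rw [← hm, hmj]) (hrank2 y h2y hoy)
            (hrank2 z hd2 hodd) hlt
          omega
        rw [fact6 z hmj hd2 hodd, fact6 y hm.symm h2y hoy]
        exact Nat.div_le_div_right hdzy
      rw [Equiv.swap_apply_of_ne_of_ne hzy hzu]
      by_cases hzD : med z = m ∧ tlDeg E z ≠ 2 ∧ ¬ Odd (tlDeg E z) ∧ ordA z < ordA y
      · obtain ⟨hzm, hzd, hzo, hzA⟩ := hzD
        have hzD' : z ∈ D := by
          rw [hD, Finset.mem_filter]
          exact ⟨hzB, hzy, hzm, hzd, hzo, hzA⟩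
        have hord' : ord' z < ord' u :=
          lt_of_le_of_ne (humax z (Finset.mem_insert_of_mem hzD'))
            (hinj'.ne hzu)
        rw [if_pos hzA, if_pos hord']
      · refine le_trans ?_ (hOge u z hzu)
        rcases lt_trichotomy (med z) m with hlt | heq | hgt
        · have hA : ordA z < ordA y := hmlt z y (hm ▸ hlt)
          rw [if_pos hA]
          exact le_min le_rfl (fact1 z hlt)
        · by_cases hdz : tlDeg E z = 2
          · have hA : ordA z < ordA y := by
              apply hrk z y (by rw [← hm, heq])
              rw [hrank0 z hdz, hrank2 y h2y hoy]
              omega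
            rw [if_pos hA, (fact3 z heq hdz).2]
            exact Nat.zero_le _
          · by_cases hoz : Odd (tlDeg E z)
            · have hA : ordA z < ordA y := by
                apply hrk z y (by rw [← hm, heq])
                rw [hrank1 z hoz, hrank2 y h2y hoy]
                omega
              have h5 := fact5 z heq hoz
              rw [if_pos hA]
              exact le_min le_rfl (le_of_eq h5.symm)
            · -- rank 2, not in D, ≠ y: must be after y
              have hA : ordA y < ordA z := by
                rcases (hinjA.ne hzy).lt_or_gt with h | h
                · exact absurd ⟨heq, hdz, hoz, h⟩ hzD
                · exact h
              rw [if_neg (by omega), if_pos hA]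
              exact le_min (fact4 z heq hdz) le_rfl
        · have hA : ordA y < ordA z := hmlt y z (hm ▸ hgt)
          rw [if_neg (by omega), if_pos hA]
          exact le_min (fact2 z hgt) le_rfl
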